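/- Let F and G be Borel probability measures on ℝ, let κ be a Markov kernel from ℝ to ℝ, and let μ := F.prod (G ⊗ₘ κ) be the resulting probability measure on ℝ × (ℝ × ℝ), a generic point being written (t,(w,c)). Write S(u) := F([u,∞)), let c₀ := ∫ S(w) dG(w), assume 0 < c₀ and that S(w) > 0 for G-almost every w, and define G₀ := c₀⁻¹ • (G.withDensity S). Then for every u ∈ ℝ, μ({(t,(w,c)) : w ≤ u, u ≤ t, u ≤ c}) = c₀ · S(u) · ∫_{(−∞,u]} κ(w)([u,∞)) · S(w)⁻¹ dG₀(w). (The representation R₀(u) = S_X(u) ∫₀^u Q₀(u|w) S_X(w)⁻¹ G₀(dw) of the observable at-risk probability in terms of the target survival function, the observable censoring survival function and the observable truncation distribution, used to parametrize the efficient influence function in Section 4.) -/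

import Mathlib

open Set MeasureTheory ProbabilityTheory
open scoped ENNReal

/-- The representation `R₀(u) = S_X(u) ∫₀^u Q₀(u|w) S_X(w)⁻¹ G₀(dw)` of the observable
at-risk probability in terms of the target survival function `S`, the censoring kernel `κ`
and the observable truncation distribution `G₀ = c₀⁻¹ • (G.withDensity S)`. -/
theorem at_risk_representation
    (F G : Measure ℝ) [IsProbabilityMeasure F] [IsProbabilityMeasure G]
    (κ : Kernel ℝ ℝ) [IsMarkovKernel κ]
    (μ : Measure (ℝ × ℝ × ℝ)) (hμ : μ = F.prod (G ⊗ₘ κ))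
    (S : ℝ → ℝ≥0∞) (hS : ∀ u, S u = F (Ici u))
    (c₀ : ℝ≥0∞) (hc₀ : c₀ = ∫⁻ w, S w ∂G) (hc₀pos : 0 < c₀)
    (hSpos : ∀ᵐ w ∂G, 0 < S w)
    (G₀ : Measure ℝ) (hG₀ : G₀ = c₀⁻¹ • (G.withDensity S)) :
    ∀ u : ℝ,
      μ {q : ℝ × ℝ × ℝ | q.2.1 ≤ u ∧ u ≤ q.1 ∧ u ≤ q.2.2}
        = c₀ * S u * ∫⁻ w in Iic u, κ w (Ici u) * (S w)⁻¹ ∂G₀ := by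
  intro u
  have hSanti : Antitone S := fun a b hab => by
    rw [hS, hS]; exact measure_mono (Ici_subset_Ici.mpr hab)
  have hSmeas : Measurable S := hSanti.measurable
  have hSle : ∀ w, S w ≤ 1 := fun w => by rw [hS]; exact prob_le_one
  have hc₀ne : c₀ ≠ ∞ := by
    refine ne_top_of_le_ne_top ENNReal.one_ne_top ?_
    rw [hc₀]
    calc ∫⁻ w, S w ∂G ≤ ∫⁻ _, 1 ∂G := lintegral_mono hSle
      _ = 1 := by simp
  have hset : {q : ℝ × ℝ × ℝ | q.2.1 ≤ u ∧ u ≤ q.1 ∧ u ≤ q.2.2}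
      = Ici u ×ˢ (Iic u ×ˢ Ici u) := by
    ext ⟨t, w, c⟩
    simp only [Set.mem_setOf_eq, Set.mem_prod, Set.mem_Ici, Set.mem_Iic]
    tauto
  -- compute the RHS integral
  have hκmeas : Measurable fun w => κ w (Ici u) := Kernel.measurable_coe κ measurableSet_Ici
  have hrhs : (∫⁻ w in Iic u, κ w (Ici u) * (S w)⁻¹ ∂G₀)
      = c₀⁻¹ * ∫⁻ w in Iic u, κ w (Ici u) ∂G := by
    rw [hG₀, Measure.restrict_smul, lintegral_smul_measure,
      restrict_withDensity measurableSet_Iic, smul_eq_mul]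
    erw [lintegral_withDensity_eq_lintegral_mul _ hSmeas
        (hκmeas.mul (hSmeas.inv))]
    congr 1
    refine lintegral_congr_ae (ae_restrict_of_ae ?_)
    filter_upwards [hSpos] with w hw
    have hne : S w ≠ 0 := hw.ne'
    have hnt : S w ≠ ∞ := ne_top_of_le_ne_top (by simp) (hSle w)
    simp only [Pi.mul_apply, Pi.inv_apply]
    rw [mul_comm (κ w (Ici u)), ← mul_assoc, ENNReal.mul_inv_cancel hne hnt, one_mul]
  rw [hμ, hset, Measure.prod_prod,
    Measure.compProd_apply_prod measurableSet_Iic measurableSet_Ici, hrhs, ← hS,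
    mul_comm c₀ (S u), mul_assoc, ← mul_assoc c₀,
    ENNReal.mul_inv_cancel hc₀pos.ne' hc₀ne, one_mul]
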